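/- Let R be a commutative ring, v an (ℝ≥0 ∪ {∞})-valued valuation on R, and J a proper ideal. Then v(J̄) = v(J), where v(I) := inf { v(x) : x ∈ I } and J̄ is the integral closure of J. -/

import Mathlib

/-- The integral closure `J̄` of an ideal `J`: elements `x` satisfying an equation
`x ^ k + a 1 * x ^ (k-1) + ⋯ + a k = 0` with `a i ∈ J ^ i`. -/
def intCl {R : Type*} [CommRing R] (J : Ideal R) : Set R :=
  {x | ∃ k : ℕ, 0 < k ∧ ∃ a : ℕ → R, (∀ i, 1 ≤ i → i ≤ k → a i ∈ J ^ i) ∧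
    x ^ k + ∑ i ∈ Finset.Icc 1 k, a i * x ^ (k - i) = 0}

/-- The special part of the integral closure of an ideal `I` of a local ring `(R,m)`:
`I^{-sp} = {x | x ^ n ∈ (m * I ^ n)‾ for some n ≥ 1}`. -/
def spIntCl {R : Type*} [CommRing R] [IsLocalRing R] (I : Ideal R) : Set R :=
  {x | ∃ n : ℕ, 1 ≤ n ∧ x ^ n ∈ intCl (IsLocalRing.maximalIdeal R * I ^ n)}

private lemma val_sum_ge {R : Type*} [CommRing R] (v : AddValuation R ENNReal)
    (s : Finset ℕ) (f : ℕ → R) (c : ENNReal) (h : ∀ i ∈ s, c ≤ v (f i)) :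
    c ≤ v (∑ i ∈ s, f i) := by
  induction s using Finset.induction with
  | empty => simp [v.map_zero]
  | @insert a s hnot ih =>
    rw [Finset.sum_insert hnot]
    refine le_trans (le_min (h _ (Finset.mem_insert_self _ _))
      (ih fun i hi => h i (Finset.mem_insert_of_mem hi))) (v.map_add _ _)

private lemma val_pow_mem {R : Type*} [CommRing R] (v : AddValuation R ENNReal)
    (J : Ideal R) : ∀ (i : ℕ) (y : R), y ∈ J ^ i → i • (⨅ x ∈ J, v x) ≤ v y := by
  intro i
  induction i with
  | zero => intro y _; simp
  | succ n ih =>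
    intro y hy
    rw [pow_succ] at hy
    refine Submodule.mul_induction_on hy ?_ ?_
    · intro m hm r hr
      rw [v.map_mul, succ_nsmul]
      exact add_le_add (ih _ hm) (iInf₂_le r hr)
    · intro a b ha hb
      exact le_trans (le_min ha hb) (v.map_add a b)

/-- For any commutative ring `R`, any `(ℝ≥0 ∪ {∞})`-valued
(additive) valuation `v` on `R` and any proper ideal `J`, `v(J̄) = v(J)`, where
`v(I) = inf {v x | x ∈ I}`. -/
theorem addValuation_intCl
    {R : Type*} [CommRing R] (v : AddValuation R ENNReal)
    (J : Ideal R) (hJ : J ≠ ⊤) :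
    (⨅ x ∈ intCl J, v x) = ⨅ x ∈ J, v x := by
  refine le_antisymm (le_iInf₂ fun x hx => iInf₂_le x ?_) (le_iInf₂ fun x hx => ?_)
  · -- J ⊆ intCl J
    refine ⟨1, one_pos, fun _ => -x, fun i h1 h2 => ?_, ?_⟩
    · have : i = 1 := le_antisymm h2 h1
      subst this; simpa using hx
    · simp
  · -- hard direction
    by_cases hxt : v x = ⊤
    · rw [hxt]; exact le_top
    obtain ⟨k, hk, a, haJ, heq⟩ := hx
    set vJ := ⨅ y ∈ J, v y with hvJ
    have hneg1 : v (-1 : R) = 0 := by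
      have h1 : v (-1 : R) + v (-1 : R) = 0 := by
        rw [← v.map_mul]; simp [v.map_one]
      exact (add_eq_zero.mp h1).1
    have hneg : ∀ y : R, v (-y) = v y := fun y => by
      rw [← neg_one_mul, v.map_mul, hneg1, zero_add]
    have hne : (Finset.Icc 1 k).Nonempty := ⟨1, Finset.mem_Icc.2 ⟨le_refl 1, hk⟩⟩
    obtain ⟨i₀, hi₀, hmin⟩ := Finset.exists_min_image (Finset.Icc 1 k)
      (fun i => v (a i * x ^ (k - i))) hne
    rw [Finset.mem_Icc] at hi₀
    have hxk : x ^ k = -∑ i ∈ Finset.Icc 1 k, a i * x ^ (k - i) :=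
      eq_neg_of_add_eq_zero_left heq
    have h1 : i₀ • vJ + (k - i₀) • v x ≤ i₀ • v x + (k - i₀) • v x := by
      calc i₀ • vJ + (k - i₀) • v x
          ≤ v (a i₀) + (k - i₀) • v x :=
            add_le_add_left (val_pow_mem v J i₀ _ (haJ i₀ hi₀.1 hi₀.2)) _
        _ = v (a i₀ * x ^ (k - i₀)) := by rw [v.map_mul, v.map_pow]
        _ ≤ v (∑ i ∈ Finset.Icc 1 k, a i * x ^ (k - i)) := val_sum_ge v _ _ _ hmin
        _ = v (x ^ k) := by rw [hxk, hneg]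
        _ = k • v x := v.map_pow x k
        _ = i₀ • v x + (k - i₀) • v x := by
            rw [← add_nsmul, Nat.add_sub_cancel' hi₀.2]
    have hfin : (k - i₀) • v x ≠ ⊤ := by
      simp only [nsmul_eq_mul]
      exact ENNReal.mul_ne_top (by simp) hxt
    rw [add_comm (i₀ • vJ), add_comm (i₀ • v x)] at h1
    have h2 : i₀ • vJ ≤ i₀ • v x := (ENNReal.add_le_add_iff_left hfin).mp h1
    simp only [nsmul_eq_mul] at h2
    exact (ENNReal.mul_le_mul_iff_right (Nat.cast_ne_zero.2 (by omega)) (ENNReal.natCast_ne_top i₀)).mp h2
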